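/- If R is a finite commutative ring with identity, |R| = l, which is not an integral domain, and |Ann(x)| = m for every nonzero zero-divisor x ∈ Z(R), then |{(x,y) ∈ R × R : xy = 0}| = 2l + (m-1)k - 1, where k = |Z(R)|. -/

import Mathlib

theorem stmt_4 (R : Type*) [CommRing R] [Fintype R] [Nontrivial R] [DecidableEq R]
    (l m k : ℕ) (hl : Fintype.card R = l)
    (hnd : ∃ x : R, x ≠ 0 ∧ ∃ y : R, y ≠ 0 ∧ x * y = 0)
    (hk : k = (Finset.univ.filter fun x : R => x ≠ 0 ∧ ∃ y : R, y ≠ 0 ∧ x * y = 0).card)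
    (hm : ∀ x : R, (x ≠ 0 ∧ ∃ y : R, y ≠ 0 ∧ x * y = 0) →
      (Finset.univ.filter fun y : R => x * y = 0).card = m) :
    (Finset.univ.filter fun p : R × R => p.1 * p.2 = 0).card = 2 * l + (m - 1) * k - 1 := by
  classical
  set Z : Finset R := Finset.univ.filter fun x : R => x ≠ 0 ∧ ∃ y : R, y ≠ 0 ∧ x * y = 0 with hZ
  set f : R → ℕ := fun x => (Finset.univ.filter fun y : R => x * y = 0).card with hf
  -- total count as a sum over x
  have hsum : (Finset.univ.filter fun p : R × R => p.1 * p.2 = 0).card = ∑ x : R, f x := by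
    rw [Finset.card_filter, Fintype.sum_prod_type]
    exact Finset.sum_congr rfl fun x _ => (Finset.card_filter _ _).symm
  -- f 0 = l
  have h0 : f 0 = l := by
    simp [hf, ← hl, Finset.filter_true_of_mem]
  -- f x = 1 for nonzero non-zero-divisors
  have h1 : ∀ x : R, x ≠ 0 → x ∉ Z → f x = 1 := by
    intro x hx hxZ
    have hreg : ∀ y : R, x * y = 0 → y = 0 := by
      intro y hy
      by_contra hy0
      exact hxZ (Finset.mem_filter.mpr ⟨Finset.mem_univ x, hx, y, hy0, hy⟩)
    have : (Finset.univ.filter fun y : R => x * y = 0) = {0} := by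
      ext y
      simp only [Finset.mem_filter, Finset.mem_univ, true_and, Finset.mem_singleton]
      exact ⟨hreg y, fun h => by simp [h]⟩
    simp [hf, this]
  -- split the sum
  have hZsub : Z ⊆ Finset.univ.erase 0 := by
    intro x hx
    rcases Finset.mem_filter.mp hx with ⟨_, hx0, _⟩
    exact Finset.mem_erase.mpr ⟨hx0, Finset.mem_univ x⟩
  have hsplit : ∑ x : R, f x = f 0 + (∑ x ∈ Z, f x + ∑ x ∈ (Finset.univ.erase 0) \ Z, f x) := by
    have e1 : ∑ x ∈ (Finset.univ.erase 0) \ Z, f x + ∑ x ∈ Z, f x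
        = ∑ x ∈ Finset.univ.erase 0, f x := Finset.sum_sdiff hZsub
    have e2 : f 0 + ∑ x ∈ Finset.univ.erase 0, f x = ∑ x : R, f x :=
      Finset.add_sum_erase _ f (Finset.mem_univ 0)
    omega
  have hZm : ∑ x ∈ Z, f x = m * k := by
    rw [Finset.sum_congr rfl fun x hx => hm x (Finset.mem_filter.mp hx).2]
    simp [hk, mul_comm, hZ]
  have hE1 : ∑ x ∈ (Finset.univ.erase 0) \ Z, f x = l - 1 - k := by
    rw [Finset.sum_congr rfl fun x hx => by
      rcases Finset.mem_sdiff.mp hx with ⟨hx1, hx2⟩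
      exact h1 x (Finset.mem_erase.mp hx1).1 hx2]
    rw [Finset.sum_const, smul_eq_mul, mul_one]
    rw [Finset.card_sdiff_of_subset hZsub, Finset.card_erase_of_mem (Finset.mem_univ 0),
      Finset.card_univ, hl, hk]
  -- bounds for arithmetic
  have hm2 : 1 ≤ m := by
    obtain ⟨x, hx⟩ := hnd
    have := hm x hx
    rw [← this]
    refine Finset.card_pos.mpr ⟨0, ?_⟩
    simp
  have hkl : k + 1 ≤ l := by
    have : Z ⊆ Finset.univ.erase 0 := hZsub
    have := Finset.card_le_card this
    rw [Finset.card_erase_of_mem (Finset.mem_univ 0), Finset.card_univ, hl] at this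
    have hl1 : 1 ≤ l := by
      rw [← hl]; exact Fintype.card_pos
    omega
  rw [hsum, hsplit, h0, hZm, hE1, Nat.sub_one_mul]
  have hkmk : k ≤ m * k := Nat.le_mul_of_pos_left k hm2
  omega
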